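/- With d_k(u,v,n) denoting the number of colored partitions counted by D(u,v,n) whose largest part is at most k (in the colored ordering), the recurrence d_{(2k+1)_{ab}}(u,v,n) = d_{(2k)_b}(u,v,n) + d_{(2k−1)_a}(u−1, v−1, n−2k−1) holds for all u,v ∈ ℕ and k,n ≥ 1. -/
import Mathlib

/-- The five colours a, b, ab, a², b². -/
inductive Col where
  | a | b | ab | aa | bb
deriving DecidableEq, Inhabited

open Col

/-- Position of a coloured integer in the ordering
1_{ab} < 1_a < 1_{b²} < 1_b < 2_{ab} < 2_a < 3_{a²} < 2_b < 3_{ab} < ⋯ . -/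
def colPos : ℕ × Col → ℕ
  | (k, Col.ab) => 4 * k - 4
  | (k, Col.a)  => 4 * k - 3
  | (k, Col.bb) => 4 * k - 2
  | (k, Col.b)  => 4 * k - 1
  | (k, Col.aa) => 4 * k - 6

/-- Entry of the matrix A: minimal gap below a part of size `k` and colour `x`,
above a part of colour `y`. -/
def colMinGap (k : ℕ) (x y : Col) : ℕ :=
  match x, y with
  | Col.a, y => if k % 2 = 1 then
      (match y with | Col.ab => 1 | _ => 2)
    else
      (match y with | Col.aa => 3 | Col.bb => 3 | _ => 2)
  | Col.bb, y => (match y with | Col.b => 3 | Col.bb => 4 | _ => 2)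
  | Col.b, y => if k % 2 = 1 then
      (match y with | Col.a => 1 | Col.ab => 1 | _ => 2)
    else
      (match y with | Col.a => 1 | Col.ab => 1 | Col.aa => 1 | Col.bb => 3 | _ => 2)
  | Col.ab, y => if k % 2 = 0 then
      (match y with | Col.aa => 3 | Col.bb => 3 | _ => 2)
    else
      (match y with | Col.b => 3 | Col.bb => 3 | _ => 2)
  | Col.aa, y => (match y with | Col.aa => 4 | Col.bb => 4 | _ => 3)

/-- A coloured partition as in the non-dilated Siladić theorem: parts are coloured
positive integers, squared colours only occur on odd integers, there is no part
1_{ab} or 1_{b²}, and consecutive parts satisfy the gap conditions of matrix A. -/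
def IsColPartition (l : List (ℕ × Col)) : Prop :=
  (∀ p ∈ l, 1 ≤ p.1 ∧ ((p.2 = Col.aa ∨ p.2 = Col.bb) → p.1 % 2 = 1) ∧
    p ≠ (1, Col.ab) ∧ p ≠ (1, Col.bb)) ∧
  ∀ i, i + 1 < l.length →
    l[i]!.1 ≥ l[i+1]!.1 + colMinGap l[i]!.1 l[i]!.2 l[i+1]!.2

/-- Number of parts coloured a or ab, plus twice the number of parts coloured a². -/
def aCt (l : List (ℕ × Col)) : ℕ :=
  (l.countP fun p => p.2 == Col.a || p.2 == Col.ab) +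
    2 * (l.countP fun p => p.2 == Col.aa)

/-- Number of parts coloured b or ab, plus twice the number of parts coloured b². -/
def bCt (l : List (ℕ × Col)) : ℕ :=
  (l.countP fun p => p.2 == Col.b || p.2 == Col.ab) +
    2 * (l.countP fun p => p.2 == Col.bb)

/-- D(u,v,n): coloured partitions of n with a-count u and b-count v. -/
noncomputable def Dct (u v n : ℕ) : ℕ :=
  Nat.card {l : List (ℕ × Col) // IsColPartition l ∧
    (l.map Prod.fst).sum = n ∧ aCt l = u ∧ bCt l = v}

/-- d_K(u,v,n): as D(u,v,n) but with largest part at most K in the coloured order;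
integer arguments (negative values give 0). -/
noncomputable def dct (K : ℕ × Col) (u v n : ℤ) : ℕ :=
  Nat.card {l : List (ℕ × Col) // IsColPartition l ∧
    (∀ p ∈ l, colPos p ≤ colPos K) ∧
    ((l.map Prod.fst).sum : ℤ) = n ∧ (aCt l : ℤ) = u ∧ (bCt l : ℤ) = v}

/-- e_K(u,v,n): as d_K(u,v,n) but with largest part exactly K. -/
noncomputable def ect (K : ℕ × Col) (u v n : ℤ) : ℕ :=
  Nat.card {l : List (ℕ × Col) // IsColPartition l ∧
    (∀ p ∈ l, colPos p ≤ colPos K) ∧ l ≠ [] ∧ l.head! = K ∧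
    ((l.map Prod.fst).sum : ℤ) = n ∧ (aCt l : ℤ) = u ∧ (bCt l : ℤ) = v}

/-- The generating function G_K(a,b,q) = 1 + ∑_{u,v≥0,n≥1} d_K(u,v,n) aᵘbᵛqⁿ,
as a formal power series in the variables a = X 0, b = X 1, q = X 2. -/
noncomputable def Gf (K : ℕ × Col) : MvPowerSeries (Fin 3) ℚ :=
  fun e => (dct K (e 0) (e 1) (e 2) : ℚ)

/- ## Auxiliary lemmas -/

instance : Finite Col :=
  Finite.of_injective (fun c : Col => (match c with
    | Col.a => 0 | Col.b => 1 | Col.ab => 2 | Col.aa => 3 | Col.bb => 4 : Fin 5))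
    (by intro x y h; cases x <;> cases y <;> first | rfl | (revert h; decide))

lemma recAux_tail {x : ℕ × Col} {t : List (ℕ × Col)}
    (h : IsColPartition (x :: t)) : IsColPartition t := by
  obtain ⟨h1, h2⟩ := h
  refine ⟨fun p hp => h1 p (List.mem_cons_of_mem _ hp), fun i hi => ?_⟩
  have := h2 (i + 1) (by simpa using Nat.succ_lt_succ hi)
  simpa [List.getElem!_cons_succ] using this

lemma recAux_cons {x : ℕ × Col} {t : List (ℕ × Col)}
    (ht : IsColPartition t)
    (hx : 1 ≤ x.1 ∧ ((x.2 = Col.aa ∨ x.2 = Col.bb) → x.1 % 2 = 1) ∧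
      x ≠ (1, Col.ab) ∧ x ≠ (1, Col.bb))
    (hgap : ∀ y ∈ t.head?, x.1 ≥ y.1 + colMinGap x.1 x.2 y.2) :
    IsColPartition (x :: t) := by
  obtain ⟨h1, h2⟩ := ht
  refine ⟨fun p hp => ?_, fun i hi => ?_⟩
  · rcases List.mem_cons.1 hp with rfl | hp
    · exact hx
    · exact h1 p hp
  · cases i with
    | zero =>
      cases t with
      | nil => simp at hi
      | cons y s =>
        simpa [List.getElem!_cons_zero, List.getElem!_cons_succ] using hgap y rfl
    | succ i =>
      have hi' : i + 1 < t.length := by simpa using Nat.lt_of_succ_lt_succ hi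
      have := h2 i hi'
      simpa [List.getElem!_cons_succ] using this

lemma recAux_gap_ge_one (m : ℕ) (c c' : Col) : 1 ≤ colMinGap m c c' := by
  rcases Nat.mod_two_eq_zero_or_one m with hm | hm <;>
    cases c <;> cases c' <;> unfold colMinGap <;> simp only [hm] <;> decide

lemma recAux_gap_aa (m : ℕ) (c' : Col) : 3 ≤ colMinGap m Col.aa c' := by
  rcases c' with _ | _ | _ | _ | _
  · exact le_refl 3
  · exact le_refl 3
  · exact le_refl 3
  · exact Nat.le_succ 3
  · exact Nat.le_succ 3

lemma recAux_gap_ab_odd (K : ℕ) (h : ¬ K % 2 = 0) (c : Col) :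
    colMinGap K Col.ab c = if c = Col.b ∨ c = Col.bb then 3 else 2 := by
  rcases c with _ | _ | _ | _ | _
  · show (if K % 2 = 0 then 2 else 2) = _
    rw [if_neg h]; decide
  · show (if K % 2 = 0 then 2 else 3) = _
    rw [if_neg h]; decide
  · show (if K % 2 = 0 then 2 else 2) = _
    rw [if_neg h]; decide
  · show (if K % 2 = 0 then 3 else 2) = _
    rw [if_neg h]; decide
  · show (if K % 2 = 0 then 3 else 3) = _
    rw [if_neg h]; decide

lemma recAux_colPos_le (y : ℕ × Col) (h : 1 ≤ y.1) : colPos y ≤ 4 * y.1 - 1 := by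
  obtain ⟨m, c⟩ := y
  simp only at h
  rcases c with _ | _ | _ | _ | _
  · show 4 * m - 3 ≤ 4 * (m, Col.a).1 - 1; omega
  · show 4 * m - 1 ≤ 4 * (m, Col.b).1 - 1; omega
  · show 4 * m - 4 ≤ 4 * (m, Col.ab).1 - 1; omega
  · show 4 * m - 6 ≤ 4 * (m, Col.aa).1 - 1; omega
  · show 4 * m - 2 ≤ 4 * (m, Col.bb).1 - 1; omega

lemma recAux_colPos_lt {x y : ℕ × Col} (hy : 1 ≤ y.1)
    (h : x.1 ≥ y.1 + colMinGap x.1 x.2 y.2) : colPos y < colPos x := by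
  have hcy := recAux_colPos_le y hy
  obtain ⟨m, c⟩ := x
  simp only at h
  rcases c with _ | _ | _ | _ | _
  · have h1 := recAux_gap_ge_one m Col.a y.2
    have e : colPos (m, Col.a) = 4 * m - 3 := rfl
    omega
  · have h1 := recAux_gap_ge_one m Col.b y.2
    have e : colPos (m, Col.b) = 4 * m - 1 := rfl
    omega
  · have h1 := recAux_gap_ge_one m Col.ab y.2
    have e : colPos (m, Col.ab) = 4 * m - 4 := rfl
    omega
  · have h3 := recAux_gap_aa m y.2
    have e : colPos (m, Col.aa) = 4 * m - 6 := rfl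
    omega
  · have h1 := recAux_gap_ge_one m Col.bb y.2
    have e : colPos (m, Col.bb) = 4 * m - 2 := rfl
    omega

lemma recAux_tail_lt {y : ℕ × Col} {s : List (ℕ × Col)}
    (h : IsColPartition (y :: s)) : ∀ p ∈ s, colPos p < colPos y := by
  induction s generalizing y with
  | nil => simp
  | cons z s' ih =>
    intro p hp
    have hz : colPos z < colPos y := by
      have hzv := h.1 z (by simp)
      have hg := h.2 0 (by simp)
      simp only [List.getElem!_cons_zero, List.getElem!_cons_succ] at hg
      exact recAux_colPos_lt hzv.1 hg
    rcases List.mem_cons.1 hp with rfl | hp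
    · exact hz
    · exact lt_trans (ih (recAux_tail h) p hp) hz

lemma recAux_mem_le_sum {l : List ℕ} {a : ℕ} (h : a ∈ l) : a ≤ l.sum := by
  induction l with
  | nil => simp at h
  | cons b t ih =>
    rcases List.mem_cons.1 h with rfl | h
    · simp
    · have := ih h; simp; omega

lemma recAux_finite (n : ℕ) :
    {l : List (ℕ × Col) | (∀ p ∈ l, 1 ≤ p.1) ∧ (l.map Prod.fst).sum ≤ n}.Finite := by
  have h1 : {l : List (Fin (n + 1) × Col) | l.length ≤ n}.Finite :=
    List.finite_length_le _ n
  have h2 := h1.image (List.map (fun p : Fin (n + 1) × Col => ((p.1 : ℕ), p.2)))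
  apply h2.subset
  rintro l ⟨hl1, hl2⟩
  refine ⟨l.map (fun p => (⟨min p.1 n, Nat.lt_succ_of_le (min_le_right _ _)⟩, p.2)), ?_, ?_⟩
  · simp only [Set.mem_setOf_eq, List.length_map]
    calc l.length = (l.map Prod.fst).length := by simp
    _ ≤ (l.map Prod.fst).sum := List.length_le_sum_of_one_le _ (by
        intro i hi
        obtain ⟨p, hp, rfl⟩ := List.mem_map.1 hi
        exact hl1 p hp)
    _ ≤ n := hl2
  · rw [List.map_map]
    conv_rhs => rw [← List.map_id l]
    apply List.map_congr_left
    intro p hp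
    have hle : p.1 ≤ n := by
      have : p.1 ∈ l.map Prod.fst := List.mem_map.2 ⟨p, hp, rfl⟩
      exact le_trans (recAux_mem_le_sum this) hl2
    simp [Function.comp, min_eq_left hle]

/-- Recurrence (3.1): d_{(2k+1)_{ab}}(u,v,n) = d_{(2k)_b}(u,v,n) + d_{(2k-1)_a}(u-1,v-1,n-2k-1). -/
theorem recurrence_eqd1 (u v k n : ℕ) (hk : 1 ≤ k) (hn : 1 ≤ n) :
    dct (2*k+1, Col.ab) u v n =
      dct (2*k, Col.b) u v n +
      dct (2*k-1, Col.a) ((u : ℤ) - 1) ((v : ℤ) - 1) ((n : ℤ) - (2*k+1)) := by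
  classical
  have e1 : colPos (2*k+1, Col.ab) = 8*k := by
    show 4 * (2*k+1) - 4 = 8*k
    omega
  have e2 : colPos (2*k, Col.b) = 8*k - 1 := by
    show 4 * (2*k) - 1 = 8*k - 1
    omega
  have e3 : colPos (2*k-1, Col.a) = 8*k - 7 := by
    show 4 * (2*k-1) - 3 = 8*k - 7
    omega
  set A : Set (List (ℕ × Col)) := {l | IsColPartition l ∧
    (∀ p ∈ l, colPos p ≤ colPos (2*k+1, Col.ab)) ∧
    ((l.map Prod.fst).sum : ℤ) = (n : ℤ) ∧ (aCt l : ℤ) = (u : ℤ) ∧ (bCt l : ℤ) = (v : ℤ)} with hA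
  set B : Set (List (ℕ × Col)) := {l | IsColPartition l ∧
    (∀ p ∈ l, colPos p ≤ colPos (2*k, Col.b)) ∧
    ((l.map Prod.fst).sum : ℤ) = (n : ℤ) ∧ (aCt l : ℤ) = (u : ℤ) ∧ (bCt l : ℤ) = (v : ℤ)} with hB
  set C : Set (List (ℕ × Col)) := {l | IsColPartition l ∧
    (∀ p ∈ l, colPos p ≤ colPos (2*k-1, Col.a)) ∧
    ((l.map Prod.fst).sum : ℤ) = (n : ℤ) - (2*k+1) ∧
    (aCt l : ℤ) = (u : ℤ) - 1 ∧ (bCt l : ℤ) = (v : ℤ) - 1} with hC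
  have hdA : dct (2*k+1, Col.ab) u v n = A.ncard := Nat.card_coe_set_eq A
  have hdB : dct (2*k, Col.b) u v n = B.ncard := Nat.card_coe_set_eq B
  have hdC : dct (2*k-1, Col.a) ((u : ℤ) - 1) ((v : ℤ) - 1) ((n : ℤ) - (2*k+1)) = C.ncard :=
    Nat.card_coe_set_eq C
  have hBfin : B.Finite := by
    apply (recAux_finite n).subset
    rintro l ⟨hp, _, hs, _, _⟩
    exact ⟨fun p hp' => (hp.1 p hp').1, by omega⟩
  have hCfin : C.Finite := by
    apply (recAux_finite n).subset
    rintro l ⟨hp, _, hs, _, _⟩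
    exact ⟨fun p hp' => (hp.1 p hp').1, by omega⟩
  have hsplit : A = B ∪ (List.cons (2*k+1, Col.ab)) '' C := by
    ext l
    constructor
    · rintro ⟨hpart, hbound, hsum, ha, hb⟩
      by_cases hmem : ((2*k+1 : ℕ), Col.ab) ∈ l
      · right
        obtain ⟨x, t, rfl⟩ : ∃ x t, l = x :: t := by
          cases l with
          | nil => simp at hmem
          | cons x t => exact ⟨x, t, rfl⟩
        have hx : x = (2*k+1, Col.ab) := by
          rcases List.mem_cons.1 hmem with h | h
          · exact h.symm
          · exfalso
            have hlt := recAux_tail_lt hpart _ h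
            have hle := hbound x (by simp)
            omega
        subst hx
        refine ⟨t, ⟨recAux_tail hpart, ?_, ?_, ?_, ?_⟩, rfl⟩
        · cases t with
          | nil => simp
          | cons y s =>
            intro p hp
            have hy : colPos y ≤ colPos (2*k-1, Col.a) := by
              have hg := hpart.2 0 (by simp)
              simp only [List.getElem!_cons_zero, List.getElem!_cons_succ] at hg
              obtain ⟨m, c⟩ := y
              rw [e3]
              have hg2 : 2*k+1 ≥ m + (if c = Col.b ∨ c = Col.bb then 3 else 2) := by
                have hab := recAux_gap_ab_odd (2*k+1) (by omega) c
                simpa [hab] using hg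
              rcases c with _ | _ | _ | _ | _ <;> simp only [colPos] <;>
                simp only [reduceCtorEq, or_self, or_false, false_or, if_true, if_false,
                  reduceIte] at hg2 <;> omega
            rcases List.mem_cons.1 hp with rfl | hp
            · exact hy
            · have := recAux_tail_lt (recAux_tail hpart) p hp
              omega
        · simp only [List.map_cons, List.sum_cons] at hsum ⊢
          push_cast at hsum ⊢
          omega
        · simp only [aCt, List.countP_cons] at ha ⊢
          norm_num at ha ⊢
          push_cast at ha ⊢
          omega
        · simp only [bCt, List.countP_cons] at hb ⊢
          norm_num at hb ⊢
          push_cast at hb ⊢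
          omega
      · left
        refine ⟨hpart, ?_, hsum, ha, hb⟩
        intro p hp
        have hbp := hbound p hp
        have hv := hpart.1 p hp
        have hne : p ≠ ((2*k+1 : ℕ), Col.ab) := fun h => hmem (h ▸ hp)
        obtain ⟨m, c⟩ := p
        have h1 : 1 ≤ m := hv.1
        rw [e2]
        rw [e1] at hbp
        rcases c with _ | _ | _ | _ | _
        · simp only [colPos] at hbp ⊢; omega
        · simp only [colPos] at hbp ⊢; omega
        · have hm : m ≠ 2*k+1 := by simpa using hne
          simp only [colPos] at hbp ⊢; omega
        · simp only [colPos] at hbp ⊢; omega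
        · simp only [colPos] at hbp ⊢; omega
    · rintro (⟨hpart, hbound, hsum, ha, hb⟩ | ⟨t, ⟨hpart, hbound, hsum, ha, hb⟩, rfl⟩)
      · refine ⟨hpart, ?_, hsum, ha, hb⟩
        intro p hp
        have hbp := hbound p hp
        rw [e2] at hbp
        rw [e1]
        omega
      · refine ⟨?_, ?_, ?_, ?_, ?_⟩
        · refine recAux_cons hpart ⟨by simp, by simp, ?_, by simp⟩ ?_
          · simp only [ne_eq, Prod.mk.injEq]
            omega
          · intro y hy
            have hyt : y ∈ t := List.mem_of_mem_head? hy
            have hzb := hbound y hyt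
            rw [e3] at hzb
            obtain ⟨m, c⟩ := y
            have hgoal : 2*k+1 ≥ m + (if c = Col.b ∨ c = Col.bb then 3 else 2) →
                ((2*k+1 : ℕ), Col.ab).1 ≥ (m, c).1 +
                  colMinGap ((2*k+1 : ℕ), Col.ab).1 ((2*k+1 : ℕ), Col.ab).2 (m, c).2 := by
              intro hgt
              simpa [recAux_gap_ab_odd (2*k+1) (by omega) c] using hgt
            apply hgoal
            rcases c with _ | _ | _ | _ | _ <;> simp only [colPos] at hzb <;>
              simp only [reduceCtorEq, or_self, or_false, false_or, if_true, if_false,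
                reduceIte] <;> omega
        · intro p hp
          rcases List.mem_cons.1 hp with rfl | hp
          · exact le_refl _
          · have hbp := hbound p hp
            rw [e3] at hbp
            rw [e1]
            omega
        · simp only [List.map_cons, List.sum_cons]
          push_cast
          push_cast at hsum
          omega
        · simp only [aCt, List.countP_cons] at ha ⊢
          norm_num at ha ⊢
          push_cast at ha ⊢
          omega
        · simp only [bCt, List.countP_cons] at hb ⊢
          norm_num at hb ⊢
          push_cast at hb ⊢
          omega
  have hdisj : Disjoint B ((List.cons (2*k+1, Col.ab)) '' C) := by
    rw [Set.disjoint_left]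
    rintro l ⟨_, hbound, _⟩ ⟨t, _, rfl⟩
    have hbp := hbound ((2*k+1 : ℕ), Col.ab) (by simp)
    rw [e1, e2] at hbp
    omega
  rw [hdA, hdB, hdC, hsplit,
    Set.ncard_union_eq hdisj hBfin (hCfin.image _),
    Set.ncard_image_of_injective _ (List.cons_injective)]
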